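/- If G is a triangle-free graph with m edges, then the spectral radius of G satisfies ρ(G) ≤ √m, with equality if and only if G is a complete bipartite graph K_{a,b} (together with possible isolated vertices) with ab = m. -/

import Mathlib

open SimpleGraph

open scoped Classical in
noncomputable def adjMat {V : Type} [Fintype V] (G : SimpleGraph V) : Matrix V V ℝ :=
  Matrix.of fun i j => if G.Adj i j then (1 : ℝ) else 0

noncomputable def specRad {V : Type} [Fintype V] [DecidableEq V] (G : SimpleGraph V) : ℝ :=
  sSup (spectrum ℝ (adjMat G))

def TwoEdgeConnected {V : Type} (G : SimpleGraph V) : Prop :=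
  G.Connected ∧ G.edgeSet.Nonempty ∧ ∀ e ∈ G.edgeSet, (G.deleteEdges {e}).Connected

def MinTwoEdgeConnected {V : Type} (G : SimpleGraph V) : Prop :=
  TwoEdgeConnected G ∧ ∀ e ∈ G.edgeSet, ¬ TwoEdgeConnected (G.deleteEdges {e})

def TwoConnected {V : Type} (G : SimpleGraph V) : Prop :=
  3 ≤ Nat.card V ∧ ∀ v : V, ((⊤ : G.Subgraph).deleteVerts {v}).coe.Connected

def MinTwoConnected {V : Type} (G : SimpleGraph V) : Prop :=
  TwoConnected G ∧ ∀ e ∈ G.edgeSet, ¬ TwoConnected (G.deleteEdges {e})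

def HasChord {V : Type} (G : SimpleGraph V) {v : V} (c : G.Walk v v) : Prop :=
  ∃ a b, G.Adj a b ∧ a ∈ c.support ∧ b ∈ c.support ∧ s(a, b) ∉ c.edges

/-- `K_{2,t}` with one edge subdivided: `Sum.inl 0, Sum.inl 1` are the two vertices of the
small part, `Sum.inl 2` is the subdivision vertex, `Sum.inr i` the large part. -/
def SK2 (t : ℕ) : SimpleGraph (Fin 3 ⊕ Fin t) :=
  SimpleGraph.fromRel (fun x y =>
    (x = Sum.inl 0 ∧ y = Sum.inl 2) ∨
    (∃ i : Fin t, x = Sum.inl 2 ∧ y = Sum.inr i ∧ i.val = 0) ∨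
    (∃ i : Fin t, x = Sum.inl 1 ∧ y = Sum.inr i) ∨
    (∃ i : Fin t, x = Sum.inl 0 ∧ y = Sum.inr i ∧ i.val ≠ 0))

/-- `K_{2,s} * K₃`: `inl 0, inl 1` the small part of `K_{2,s}`, a triangle on
`inl 0, inl 2, inl 3`, and `inr i` the large part. -/
def K2sK3 (t : ℕ) : SimpleGraph (Fin 4 ⊕ Fin t) :=
  SimpleGraph.fromRel (fun x y =>
    (x = Sum.inl 0 ∧ y = Sum.inl 2) ∨ (x = Sum.inl 0 ∧ y = Sum.inl 3) ∨
    (x = Sum.inl 2 ∧ y = Sum.inl 3) ∨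
    (∃ i : Fin t, (x = Sum.inl 0 ∨ x = Sum.inl 1) ∧ y = Sum.inr i))

/-- The friendship graph `F_t`: vertex `0` is the common center, the `i`-th triangle is
`{0, 2i+1, 2i+2}`. -/
def friendship (t : ℕ) : SimpleGraph (Fin (2 * t + 1)) :=
  SimpleGraph.fromRel (fun x y =>
    x = 0 ∨ (∃ i : Fin t, (x : ℕ) = 2 * i + 1 ∧ (y : ℕ) = 2 * i + 2))

/-- Disjoint union of two simple graphs. -/
def disjUnion {α β : Type} (G : SimpleGraph α) (H : SimpleGraph β) : SimpleGraph (α ⊕ β) :=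
  SimpleGraph.fromRel (fun x y =>
    (∃ a b, x = Sum.inl a ∧ y = Sum.inl b ∧ G.Adj a b) ∨
    (∃ a b, x = Sum.inr a ∧ y = Sum.inr b ∧ H.Adj a b))

/-- Identifying `v ∈ H` with `w ∈ K` in the disjoint union of `H` and `K`. -/
def wedge {α β : Type} (H : SimpleGraph α) (K : SimpleGraph β) (v : α) (w : β) :
    SimpleGraph (α ⊕ {b : β // b ≠ w}) :=
  SimpleGraph.fromRel (fun x y =>
    (∃ a b, x = Sum.inl a ∧ y = Sum.inl b ∧ H.Adj a b) ∨
    (∃ a b, x = Sum.inr a ∧ y = Sum.inr b ∧ K.Adj a.1 b.1) ∨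
    (∃ b, x = Sum.inl v ∧ y = Sum.inr b ∧ K.Adj w b.1))

def IsStarCenter {V : Type} (G : SimpleGraph V) (v : V) : Prop :=
  (∀ w, w ≠ v → G.Adj v w) ∧ ∀ a b, G.Adj a b → a = v ∨ b = v



section aux
open scoped Classical
set_option linter.unusedSectionVars false
variable {V : Type} [Fintype V] [DecidableEq V] (G : SimpleGraph V)

lemma mem_spectrum_iff (A : Matrix V V ℝ) (μ : ℝ) :
    μ ∈ spectrum ℝ A ↔ ∃ v : V → ℝ, v ≠ 0 ∧ A.mulVec v = μ • v := by
  rw [spectrum.mem_iff, Matrix.isUnit_iff_isUnit_det, isUnit_iff_ne_zero, not_ne_iff,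
    ← Matrix.exists_mulVec_eq_zero_iff]
  constructor
  · rintro ⟨v, hv, h⟩
    refine ⟨v, hv, ?_⟩
    have := h
    rw [Matrix.sub_mulVec] at this
    have h2 : (algebraMap ℝ (Matrix V V ℝ) μ).mulVec v = μ • v := by
      rw [Matrix.algebraMap_eq_diagonal]
      ext i
      simp [Matrix.mulVec_diagonal]
    rw [h2] at this
    have := sub_eq_zero.mp this
    exact this.symm
  · rintro ⟨v, hv, h⟩
    refine ⟨v, hv, ?_⟩
    rw [Matrix.sub_mulVec, h]
    have h2 : (algebraMap ℝ (Matrix V V ℝ) μ).mulVec v = μ • v := by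
      rw [Matrix.algebraMap_eq_diagonal]
      ext i
      simp [Matrix.mulVec_diagonal]
    rw [h2, sub_self]

lemma adjMat_isHermitian (G : SimpleGraph V) : (adjMat G).IsHermitian := by
  ext i j
  simp only [adjMat, Matrix.conjTranspose_apply, Matrix.of_apply, starRingEnd_apply]
  rw [G.adj_comm]
  simp

lemma spectrum_finite (G : SimpleGraph V) : (spectrum ℝ (adjMat G)).Finite := by
  rw [(adjMat_isHermitian G).spectrum_real_eq_range_eigenvalues]
  exact Set.finite_range _

lemma adjMat_eq : adjMat G = G.adjMatrix ℝ := rfl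

lemma adjMat_mulVec (v : V → ℝ) (u : V) :
    (adjMat G).mulVec v u = ∑ w ∈ G.neighborFinset u, v w := by
  rw [adjMat_eq]; exact G.adjMatrix_mulVec_apply u v

set_option maxHeartbeats 1000000 in

lemma sum_deg_nbhd (hfree : G.CliqueFree 3) (u : V) :
    ((G.neighborFinset u).biUnion (fun w => G.incidenceFinset w)).card
      = ∑ w ∈ G.neighborFinset u, G.degree w ∧
    (G.neighborFinset u).biUnion (fun w => G.incidenceFinset w) ⊆ G.edgeFinset := by
  constructor
  · rw [Finset.card_biUnion]
    · exact Finset.sum_congr rfl fun w _ => G.card_incidenceFinset_eq_degree w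
    · intro w₁ h₁ w₂ h₂ hne
      rw [Function.onFun, Finset.disjoint_left]
      intro e he1 he2
      rw [mem_incidenceFinset] at he1 he2
      have hadj : G.Adj w₁ w₂ := by
        have h3 := (Sym2.mem_and_mem_iff hne).mp ⟨he1.2, he2.2⟩
        have he := he1.1
        rw [h3] at he
        exact he
      rw [Finset.mem_coe, mem_neighborFinset] at h₁ h₂
      exact hfree {u, w₁, w₂} (is3Clique_triple_iff.mpr ⟨h₁, h₂, hadj⟩)
  · intro e he
    rw [Finset.mem_biUnion] at he
    obtain ⟨w, _, hw⟩ := he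
    rw [mem_incidenceFinset] at hw
    exact mem_edgeFinset.mpr hw.1

lemma double_sum (v : V → ℝ) (μ : ℝ) (hv : (adjMat G).mulVec v = μ • v) (u : V) :
    μ ^ 2 * v u = ∑ w ∈ G.neighborFinset u, ∑ z ∈ G.neighborFinset w, v z := by
  have h1 : (adjMat G).mulVec ((adjMat G).mulVec v) u = μ ^ 2 * v u := by
    rw [hv, Matrix.mulVec_smul, hv]
    simp [smul_smul, sq]
    ring
  rw [← h1, adjMat_mulVec]
  exact Finset.sum_congr rfl fun w _ => adjMat_mulVec G v w

lemma eig_sq_le (hfree : G.CliqueFree 3) (v : V → ℝ) (hv0 : v ≠ 0) (μ : ℝ)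
    (hv : (adjMat G).mulVec v = μ • v) : μ ^ 2 ≤ (G.edgeFinset.card : ℝ) := by
  have hne : Nonempty V := by
    rcases Function.ne_iff.mp hv0 with ⟨z, _⟩; exact ⟨z⟩
  obtain ⟨u, -, hu⟩ := Finset.exists_max_image Finset.univ (fun w => |v w|)
    ⟨Classical.arbitrary V, Finset.mem_univ _⟩
  have hu' : ∀ z, |v z| ≤ |v u| := fun z => hu z (Finset.mem_univ z)
  have hupos : 0 < |v u| := by
    rcases Function.ne_iff.mp hv0 with ⟨z, hz⟩
    exact lt_of_lt_of_le (abs_pos.mpr hz) (hu' z)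
  have key : μ ^ 2 * |v u| ≤ (G.edgeFinset.card : ℝ) * |v u| := by
    have h2 := double_sum G v μ hv u
    calc μ ^ 2 * |v u| = |μ ^ 2 * v u| := by
          rw [abs_mul, abs_of_nonneg (sq_nonneg μ)]
      _ = |∑ w ∈ G.neighborFinset u, ∑ z ∈ G.neighborFinset w, v z| := by rw [h2]
      _ ≤ ∑ w ∈ G.neighborFinset u, |∑ z ∈ G.neighborFinset w, v z| :=
          Finset.abs_sum_le_sum_abs _ _
      _ ≤ ∑ w ∈ G.neighborFinset u, ∑ z ∈ G.neighborFinset w, |v z| :=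
          Finset.sum_le_sum fun w _ => Finset.abs_sum_le_sum_abs _ _
      _ ≤ ∑ w ∈ G.neighborFinset u, ∑ _z ∈ G.neighborFinset w, |v u| :=
          Finset.sum_le_sum fun w _ => Finset.sum_le_sum fun z _ => hu' z
      _ = (∑ w ∈ G.neighborFinset u, (G.degree w : ℝ)) * |v u| := by
          rw [Finset.sum_mul]
          exact Finset.sum_congr rfl fun w _ => by
            rw [Finset.sum_const, degree, nsmul_eq_mul]
      _ ≤ (G.edgeFinset.card : ℝ) * |v u| := by
          apply mul_le_mul_of_nonneg_right _ (abs_nonneg _)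
          obtain ⟨h1, h2⟩ := sum_deg_nbhd G hfree u
          calc ∑ w ∈ G.neighborFinset u, (G.degree w : ℝ)
              = (((G.neighborFinset u).biUnion (fun w => G.incidenceFinset w)).card : ℝ) := by
                rw [h1]; push_cast; ring
            _ ≤ (G.edgeFinset.card : ℝ) := by
                exact_mod_cast Finset.card_le_card h2
  exact le_of_mul_le_mul_right key hupos

lemma target_adj (a b k : ℕ) (p q : (Fin a ⊕ Fin b) ⊕ Fin k) :
    (disjUnion (completeBipartiteGraph (Fin a) (Fin b)) (⊥ : SimpleGraph (Fin k))).Adj p q ↔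
      ((∃ i j, p = .inl (.inl i) ∧ q = .inl (.inr j)) ∨
       (∃ i j, p = .inl (.inr i) ∧ q = .inl (.inl j))) := by
  rcases p with (i | i) | i <;> rcases q with (j | j) | j <;>
    simp [disjUnion, SimpleGraph.fromRel_adj, completeBipartiteGraph]

lemma structure_core {m : ℕ} (hfree : G.CliqueFree 3) (hm : G.edgeFinset.card = m)
    (hm1 : 1 ≤ m) (v : V → ℝ) (hv : (adjMat G).mulVec v = Real.sqrt m • v)
    (u : V) (hmax : ∀ z, |v z| ≤ v u) (hupos : 0 < v u) :
    ∃ a b k : ℕ, a * b = m ∧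
      Nonempty (G ≃g disjUnion (completeBipartiteGraph (Fin a) (Fin b))
        (⊥ : SimpleGraph (Fin k))) := by
  set μ := Real.sqrt m with hμdef
  have hμsq : μ ^ 2 = m := Real.sq_sqrt (by positivity)
  have hμpos : 0 < μ := Real.sqrt_pos.mpr (by exact_mod_cast hm1)
  -- the equality chain at any maximizer
  have at_max : ∀ t, v t = v u →
      (∀ w ∈ G.neighborFinset t, ∀ z ∈ G.neighborFinset w, v z = v u) ∧
      ((G.neighborFinset t).biUnion (fun w => G.incidenceFinset w) = G.edgeFinset) := by
    intro t ht
    have e1 : ∑ w ∈ G.neighborFinset t, ∑ z ∈ G.neighborFinset w, v z = (m : ℝ) * v u := by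
      rw [← double_sum G v μ hv t, hμsq, ht]
    have hterm : ∀ w ∈ G.neighborFinset t, ∀ z ∈ G.neighborFinset w, v z ≤ v u :=
      fun w _ z _ => (le_abs_self _).trans (hmax z)
    obtain ⟨hcard, hsub⟩ := sum_deg_nbhd G hfree t
    have hdegle : ∑ w ∈ G.neighborFinset t, G.degree w ≤ m := by
      rw [← hcard, ← hm]; exact Finset.card_le_card hsub
    have hup : ∑ w ∈ G.neighborFinset t, ∑ z ∈ G.neighborFinset w, v z
        ≤ (∑ w ∈ G.neighborFinset t, (G.degree w : ℝ)) * v u := by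
      rw [Finset.sum_mul]
      refine Finset.sum_le_sum fun w hw => ?_
      calc ∑ z ∈ G.neighborFinset w, v z ≤ ∑ _z ∈ G.neighborFinset w, v u :=
            Finset.sum_le_sum (hterm w hw)
        _ = (G.degree w : ℝ) * v u := by rw [Finset.sum_const, degree, nsmul_eq_mul]
    have hdegle' : (∑ w ∈ G.neighborFinset t, (G.degree w : ℝ)) ≤ (m : ℝ) := by
      exact_mod_cast hdegle
    -- both inequalities are equalities
    have heq1 : (∑ w ∈ G.neighborFinset t, (G.degree w : ℝ)) * v u = (m : ℝ) * v u := by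
      have h1 : (m : ℝ) * v u ≤ (∑ w ∈ G.neighborFinset t, (G.degree w : ℝ)) * v u := by
        rw [← e1]; exact hup
      have h2 : (∑ w ∈ G.neighborFinset t, (G.degree w : ℝ)) * v u ≤ (m : ℝ) * v u :=
        mul_le_mul_of_nonneg_right hdegle' hupos.le
      linarith
    have hdeg : ∑ w ∈ G.neighborFinset t, G.degree w = m := by
      have := mul_right_cancel₀ (ne_of_gt hupos) heq1
      exact_mod_cast this
    constructor
    · -- all distance-two values equal v u
      by_contra hcon
      push_neg at hcon
      obtain ⟨w₀, hw₀, z₀, hz₀, hne⟩ := hcon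
      have hlt : v z₀ < v u := lt_of_le_of_ne (hterm w₀ hw₀ z₀ hz₀) hne
      have hstrict : ∑ w ∈ G.neighborFinset t, ∑ z ∈ G.neighborFinset w, v z
          < (∑ w ∈ G.neighborFinset t, (G.degree w : ℝ)) * v u := by
        rw [Finset.sum_mul]
        apply Finset.sum_lt_sum
        · intro w hw
          calc ∑ z ∈ G.neighborFinset w, v z ≤ ∑ _z ∈ G.neighborFinset w, v u :=
                Finset.sum_le_sum (hterm w hw)
            _ = (G.degree w : ℝ) * v u := by rw [Finset.sum_const, degree, nsmul_eq_mul]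
        · refine ⟨w₀, hw₀, ?_⟩
          calc ∑ z ∈ G.neighborFinset w₀, v z
              < ∑ _z ∈ G.neighborFinset w₀, v u :=
                Finset.sum_lt_sum (hterm w₀ hw₀) ⟨z₀, hz₀, hlt⟩
            _ = (G.degree w₀ : ℝ) * v u := by rw [Finset.sum_const, degree, nsmul_eq_mul]
      rw [e1, heq1] at hstrict
      exact lt_irrefl _ hstrict
    · -- biUnion = edgeFinset
      apply Finset.eq_of_subset_of_card_le hsub
      rw [hcard, hdeg, hm]
  -- define the two sides
  set S : Finset V := G.neighborFinset u with hSdef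
  set T : Finset V := S.biUnion (fun w => G.neighborFinset w) with hTdef
  have hST : ∀ x, x ∈ S → x ∈ T → False := by
    intro x hxS hxT
    rw [hTdef, Finset.mem_biUnion] at hxT
    obtain ⟨w, hwS, hxw⟩ := hxT
    rw [hSdef, mem_neighborFinset] at hxS hwS
    rw [mem_neighborFinset] at hxw
    exact hfree {u, w, x} (is3Clique_triple_iff.mpr ⟨hwS, hxS, hxw⟩)
  have hT : ∀ t ∈ T, v t = v u := by
    intro t ht
    rw [hTdef, Finset.mem_biUnion] at ht
    obtain ⟨w, hwS, htw⟩ := ht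
    exact (at_max u rfl).1 w hwS t htw
  have hSne : S.Nonempty := by
    by_contra hS
    rw [Finset.not_nonempty_iff_eq_empty] at hS
    have h0 : (adjMat G).mulVec v u = 0 := by
      rw [adjMat_mulVec, ← hSdef, hS, Finset.sum_empty]
    rw [hv] at h0
    simp only [Pi.smul_apply, smul_eq_mul] at h0
    nlinarith
  have huT : u ∈ T := by
    obtain ⟨w, hw⟩ := hSne
    rw [hTdef, Finset.mem_biUnion]
    refine ⟨w, hw, ?_⟩
    rw [mem_neighborFinset]
    rw [hSdef, mem_neighborFinset] at hw
    exact hw.symm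
  -- adjacency characterization
  have hAdjST : ∀ s ∈ S, ∀ t ∈ T, G.Adj t s := by
    intro s hs t ht
    have hbig := (at_max t (hT t ht)).2
    have hedge : s(u, s) ∈ G.edgeFinset := by
      rw [mem_edgeFinset, mem_edgeSet]
      rw [hSdef, mem_neighborFinset] at hs
      exact hs
    rw [← hbig, Finset.mem_biUnion] at hedge
    obtain ⟨w, hwNt, hwinc⟩ := hedge
    rw [mem_incidenceFinset, incidenceSet] at hwinc
    have hw2 : w = u ∨ w = s := Sym2.mem_iff.mp hwinc.2
    rcases hw2 with rfl | rfl
    · exfalso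
      apply hST t _ ht
      rw [hSdef, mem_neighborFinset]
      rw [mem_neighborFinset] at hwNt
      exact hwNt.symm
    · rw [mem_neighborFinset] at hwNt
      exact hwNt
  have hAdjIff : ∀ x y, G.Adj x y ↔ ((x ∈ S ∧ y ∈ T) ∨ (x ∈ T ∧ y ∈ S)) := by
    intro x y
    constructor
    · intro hxy
      have hbig := (at_max u rfl).2
      have hedge : s(x, y) ∈ G.edgeFinset := by
        rw [mem_edgeFinset, mem_edgeSet]; exact hxy
      rw [← hbig, Finset.mem_biUnion] at hedge
      obtain ⟨w, hwS, hwinc⟩ := hedge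
      rw [mem_incidenceFinset, incidenceSet] at hwinc
      have hw2 : w = x ∨ w = y := Sym2.mem_iff.mp hwinc.2
      rcases hw2 with rfl | rfl
      · left
        refine ⟨hwS, ?_⟩
        rw [hTdef, Finset.mem_biUnion]
        exact ⟨w, hwS, (mem_neighborFinset _ _ _).mpr hxy⟩
      · right
        refine ⟨?_, hwS⟩
        rw [hTdef, Finset.mem_biUnion]
        exact ⟨w, hwS, (mem_neighborFinset _ _ _).mpr hxy.symm⟩
    · rintro (⟨hx, hy⟩ | ⟨hx, hy⟩)
      · exact (hAdjST x hx y hy).symm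
      · exact hAdjST y hy x hx
  -- m = |S| * |T|
  have hNw : ∀ w ∈ S, G.neighborFinset w = T := by
    intro w hw
    ext z
    rw [mem_neighborFinset, hAdjIff w z]
    constructor
    · rintro (⟨_, hz⟩ | ⟨hw', _⟩)
      · exact hz
      · exact absurd hw' (fun h => hST w hw h)
    · intro hz
      exact Or.inl ⟨hw, hz⟩
  have hmST : S.card * T.card = m := by
    have hdeg : ∑ w ∈ S, G.degree w = m := by
      have hcard := (sum_deg_nbhd G hfree u).1
      have hbig := (at_max u rfl).2
      rw [← hSdef] at hcard hbig
      rw [← hcard, hbig, hm]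
    calc S.card * T.card = ∑ _w ∈ S, T.card := by rw [Finset.sum_const, smul_eq_mul]
      _ = ∑ w ∈ S, G.degree w := by
          refine Finset.sum_congr rfl fun w hw => ?_
          rw [degree, hNw w hw]
      _ = m := hdeg
  -- build the isomorphism
  set R : Finset V := Finset.univ \ (S ∪ T) with hRdef
  have hmemR : ∀ x, x ∉ S → x ∉ T → x ∈ R := by
    intro x hx hx'
    rw [hRdef, Finset.mem_sdiff, Finset.mem_union]
    exact ⟨Finset.mem_univ x, fun h => h.elim hx hx'⟩
  refine ⟨S.card, T.card, R.card, hmST, ?_⟩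
  have eS : {x // x ∈ S} ≃ Fin S.card := Fintype.equivFinOfCardEq (Fintype.card_coe S)
  have eT : {x // x ∈ T} ≃ Fin T.card := Fintype.equivFinOfCardEq (Fintype.card_coe T)
  have eR : {x // x ∈ R} ≃ Fin R.card := Fintype.equivFinOfCardEq (Fintype.card_coe R)
  set f : V → (Fin S.card ⊕ Fin T.card) ⊕ Fin R.card := fun x =>
    if hx : x ∈ S then .inl (.inl (eS ⟨x, hx⟩))
    else if hx' : x ∈ T then .inl (.inr (eT ⟨x, hx'⟩))
    else .inr (eR ⟨x, hmemR x hx hx'⟩) with hfdef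
  have hinj : Function.Injective f := by
    intro x y hxy
    rw [hfdef] at hxy
    by_cases hx : x ∈ S <;> by_cases hy : y ∈ S <;>
      simp only [dif_pos, dif_neg, hx, hy] at hxy
    · simpa using hxy
    · by_cases hy' : y ∈ T <;> simp [dif_pos, dif_neg, hy'] at hxy
    · by_cases hx' : x ∈ T <;> simp [dif_pos, dif_neg, hx'] at hxy
    · by_cases hx' : x ∈ T <;> by_cases hy' : y ∈ T <;>
        simp only [dif_pos, dif_neg, hx', hy'] at hxy
      · simpa using hxy
      · simp at hxy
      · simp at hxy
      · simpa using hxy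
  have hcards : Fintype.card V = Fintype.card ((Fin S.card ⊕ Fin T.card) ⊕ Fin R.card) := by
    have hdisj : Disjoint S T := Finset.disjoint_left.mpr (fun {x} hx hx' => hST x hx hx')
    have h1 : (S ∪ T).card = S.card + T.card := Finset.card_union_of_disjoint hdisj
    have h2 : R.card + (S ∪ T).card = Finset.univ.card :=
      Finset.card_sdiff_add_card_eq_card (Finset.subset_univ _)
    simp only [Fintype.card_sum, Fintype.card_fin]
    rw [← Finset.card_univ, ← h2, h1]
    ring
  have hbij : Function.Bijective f :=
    (Fintype.bijective_iff_injective_and_card f).mpr ⟨hinj, hcards⟩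
  refine ⟨⟨Equiv.ofBijective f hbij, ?_⟩⟩
  intro x y
  show (disjUnion _ _).Adj (f x) (f y) ↔ G.Adj x y
  rw [target_adj, hAdjIff x y, hfdef]
  by_cases hx : x ∈ S <;> by_cases hy : y ∈ S <;>
    simp only [dif_pos, dif_neg, hx, hy]
  · -- x ∈ S, y ∈ S : both false
    have h1 : y ∉ T := fun h => hST y hy h
    have h2 : x ∉ T := fun h => hST x hx h
    simp [hx, hy, h1, h2]
  · -- x ∈ S, y ∉ S
    by_cases hy' : y ∈ T <;> simp only [dif_pos, dif_neg, hy']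
    · simp [hx, hy, hy', fun h => hST x hx h]
    · simp [hx, hy, hy']
  · by_cases hx' : x ∈ T <;> simp only [dif_pos, dif_neg, hx']
    · simp [hx, hy, hx', fun h => hST y hy h]
    · simp [hx, hy, hx']
  · by_cases hx' : x ∈ T <;> by_cases hy' : y ∈ T <;>
      simp only [dif_pos, dif_neg, hx', hy'] <;> simp [hx, hy, hx', hy']

lemma specRad_of_bot (G : SimpleGraph V) (hG : G = ⊥) : specRad G = 0 := by
  have hA : adjMat G = 0 := by
    ext i j
    simp [adjMat, hG]
  rw [specRad, hA]
  rcases isEmpty_or_nonempty V with hV | hV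
  · have : spectrum ℝ (0 : Matrix V V ℝ) = ∅ := by
      rw [Set.eq_empty_iff_forall_notMem]
      intro μ hμ
      obtain ⟨v, hv0, -⟩ := (mem_spectrum_iff 0 μ).mp hμ
      exact hv0 (funext fun x => hV.elim x)
    rw [this, Real.sSup_empty]
  · have : spectrum ℝ (0 : Matrix V V ℝ) = {0} := by
      ext μ
      rw [mem_spectrum_iff]
      constructor
      · rintro ⟨v, hv0, hv⟩
        rw [Matrix.zero_mulVec] at hv
        rcases smul_eq_zero.mp hv.symm with h | h
        · exact h
        · exact absurd h hv0
      · rintro rfl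
        exact ⟨fun _ => 1, by
          intro h
          have := congrFun h (Classical.arbitrary V)
          simp at this, by simp [Matrix.zero_mulVec]⟩
    rw [this, csSup_singleton]

noncomputable def valfn_def (a b k : ℕ) : (Fin a ⊕ Fin b) ⊕ Fin k → ℝ
  | .inl (.inl _) => Real.sqrt b
  | .inl (.inr _) => Real.sqrt a
  | .inr _ => 0

lemma target_sum (a b k : ℕ) (q : (Fin a ⊕ Fin b) ⊕ Fin k) :
    ∑ p : (Fin a ⊕ Fin b) ⊕ Fin k,
      (if (disjUnion (completeBipartiteGraph (Fin a) (Fin b))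
          (⊥ : SimpleGraph (Fin k))).Adj q p then valfn_def a b k p else 0)
    = (Real.sqrt a * Real.sqrt b) * valfn_def a b k q := by
  have hb2 : Real.sqrt b * Real.sqrt b = (b : ℝ) := Real.mul_self_sqrt (by positivity)
  have ha2 : Real.sqrt a * Real.sqrt a = (a : ℝ) := Real.mul_self_sqrt (by positivity)
  rcases q with (i | i) | i <;>
    rw [Fintype.sum_sum_type, Fintype.sum_sum_type]
  · have h1 : ∀ j : Fin a, (if (disjUnion (completeBipartiteGraph (Fin a) (Fin b))
        (⊥ : SimpleGraph (Fin k))).Adj (.inl (.inl i)) (.inl (.inl j))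
        then valfn_def a b k (.inl (.inl j)) else 0) = 0 := by
      intro j; rw [if_neg]; rw [target_adj]; rintro (⟨_,_,_,h⟩|⟨_,_,h,_⟩) <;> simp_all
    have h2 : ∀ j : Fin b, (if (disjUnion (completeBipartiteGraph (Fin a) (Fin b))
        (⊥ : SimpleGraph (Fin k))).Adj (.inl (.inl i)) (.inl (.inr j))
        then valfn_def a b k (.inl (.inr j)) else 0) = Real.sqrt a := by
      intro j
      rw [if_pos ((target_adj a b k _ _).mpr (Or.inl ⟨i, j, rfl, rfl⟩))]
      rfl
    have h3 : ∀ j : Fin k, (if (disjUnion (completeBipartiteGraph (Fin a) (Fin b))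
        (⊥ : SimpleGraph (Fin k))).Adj (.inl (.inl i)) (.inr j)
        then valfn_def a b k (.inr j) else 0) = 0 := by
      intro j; rw [if_neg]; rw [target_adj]; rintro (⟨_,_,_,h⟩|⟨_,_,h,_⟩) <;> simp_all
    rw [Finset.sum_congr rfl (fun j _ => h1 j), Finset.sum_congr rfl (fun j _ => h2 j),
      Finset.sum_congr rfl (fun j _ => h3 j)]
    simp only [Finset.sum_const, Finset.card_univ, Fintype.card_fin, nsmul_eq_mul,
      Finset.sum_const_zero, valfn_def]
    linear_combination (-Real.sqrt a) * hb2
  · have h1 : ∀ j : Fin a, (if (disjUnion (completeBipartiteGraph (Fin a) (Fin b))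
        (⊥ : SimpleGraph (Fin k))).Adj (.inl (.inr i)) (.inl (.inl j))
        then valfn_def a b k (.inl (.inl j)) else 0) = Real.sqrt b := by
      intro j
      rw [if_pos ((target_adj a b k _ _).mpr (Or.inr ⟨i, j, rfl, rfl⟩))]
      rfl
    have h2 : ∀ j : Fin b, (if (disjUnion (completeBipartiteGraph (Fin a) (Fin b))
        (⊥ : SimpleGraph (Fin k))).Adj (.inl (.inr i)) (.inl (.inr j))
        then valfn_def a b k (.inl (.inr j)) else 0) = 0 := by
      intro j; rw [if_neg]; rw [target_adj]; rintro (⟨_,_,_,h⟩|⟨_,_,h,_⟩) <;> simp_all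
    have h3 : ∀ j : Fin k, (if (disjUnion (completeBipartiteGraph (Fin a) (Fin b))
        (⊥ : SimpleGraph (Fin k))).Adj (.inl (.inr i)) (.inr j)
        then valfn_def a b k (.inr j) else 0) = 0 := by
      intro j; rw [if_neg]; rw [target_adj]; rintro (⟨_,_,_,h⟩|⟨_,_,h,_⟩) <;> simp_all
    rw [Finset.sum_congr rfl (fun j _ => h1 j), Finset.sum_congr rfl (fun j _ => h2 j),
      Finset.sum_congr rfl (fun j _ => h3 j)]
    simp only [Finset.sum_const, Finset.card_univ, Fintype.card_fin, nsmul_eq_mul,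
      Finset.sum_const_zero, valfn_def]
    linear_combination (-Real.sqrt b) * ha2
  · have h1 : ∀ j : Fin a, (if (disjUnion (completeBipartiteGraph (Fin a) (Fin b))
        (⊥ : SimpleGraph (Fin k))).Adj (.inr i) (.inl (.inl j))
        then valfn_def a b k (.inl (.inl j)) else 0) = 0 := by
      intro j; rw [if_neg]; rw [target_adj]; rintro (⟨_,_,h,_⟩|⟨_,_,h,_⟩) <;> simp_all
    have h2 : ∀ j : Fin b, (if (disjUnion (completeBipartiteGraph (Fin a) (Fin b))
        (⊥ : SimpleGraph (Fin k))).Adj (.inr i) (.inl (.inr j))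
        then valfn_def a b k (.inl (.inr j)) else 0) = 0 := by
      intro j; rw [if_neg]; rw [target_adj]; rintro (⟨_,_,h,_⟩|⟨_,_,h,_⟩) <;> simp_all
    have h3 : ∀ j : Fin k, (if (disjUnion (completeBipartiteGraph (Fin a) (Fin b))
        (⊥ : SimpleGraph (Fin k))).Adj (.inr i) (.inr j)
        then valfn_def a b k (.inr j) else 0) = 0 := by
      intro j; rw [if_neg]; rw [target_adj]; rintro (⟨_,_,h,_⟩|⟨_,_,h,_⟩) <;> simp_all
    rw [Finset.sum_congr rfl (fun j _ => h1 j), Finset.sum_congr rfl (fun j _ => h2 j),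
      Finset.sum_congr rfl (fun j _ => h3 j)]
    simp [valfn_def]

lemma sqrt_eigen {V : Type} [Fintype V] [DecidableEq V] (G : SimpleGraph V)
    {a b k m : ℕ} (ha : 1 ≤ a) (hb : 1 ≤ b) (hab : a * b = m)
    (e : G ≃g disjUnion (completeBipartiteGraph (Fin a) (Fin b)) (⊥ : SimpleGraph (Fin k))) :
    ∃ v : V → ℝ, v ≠ 0 ∧ (adjMat G).mulVec v = Real.sqrt m • v := by
  have hm : (m : ℝ) = (a : ℝ) * b := by exact_mod_cast hab.symm
  have hsq : Real.sqrt m = Real.sqrt a * Real.sqrt b := by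
    rw [hm, Real.sqrt_mul (by positivity)]
  refine ⟨fun x => valfn_def a b k (e x), ?_, ?_⟩
  · intro h
    have h0 := congrFun h (e.symm (.inl (.inl ⟨0, ha⟩)))
    simp only [RelIso.apply_symm_apply, Pi.zero_apply] at h0
    have : valfn_def a b k (.inl (.inl (⟨0, ha⟩ : Fin a))) = Real.sqrt b := rfl
    rw [this] at h0
    exact absurd h0 (by positivity)
  · ext x
    rw [adjMat_mulVec, Pi.smul_apply, smul_eq_mul]
    have hreindex : ∑ w ∈ G.neighborFinset x, valfn_def a b k (e w)
        = ∑ p : (Fin a ⊕ Fin b) ⊕ Fin k,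
            if (disjUnion (completeBipartiteGraph (Fin a) (Fin b))
                (⊥ : SimpleGraph (Fin k))).Adj (e x) p then valfn_def a b k p else 0 := by
      rw [neighborFinset_eq_filter, Finset.sum_filter]
      apply Fintype.sum_equiv e.toEquiv
      intro w
      simp only [RelIso.coe_fn_toEquiv]
      have h4 : G.Adj x w ↔ (disjUnion (completeBipartiteGraph (Fin a) (Fin b))
          (⊥ : SimpleGraph (Fin k))).Adj (e x) (e w) := (e.map_rel_iff).symm
      by_cases hadj : G.Adj x w
      · rw [if_pos hadj, if_pos (h4.mp hadj)]
      · rw [if_neg hadj, if_neg (fun hc => hadj (h4.mpr hc))]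
    rw [hreindex, target_sum, hsq]

lemma structure_of_eigen {V : Type} [Fintype V] [DecidableEq V] (G : SimpleGraph V) {m : ℕ}
    (hfree : G.CliqueFree 3) (hm : G.edgeFinset.card = m) (hm1 : 1 ≤ m)
    (v : V → ℝ) (hv0 : v ≠ 0) (hv : (adjMat G).mulVec v = Real.sqrt m • v) :
    ∃ a b k : ℕ, a * b = m ∧
      Nonempty (G ≃g disjUnion (completeBipartiteGraph (Fin a) (Fin b))
        (⊥ : SimpleGraph (Fin k))) := by
  have hne : Nonempty V := by
    rcases Function.ne_iff.mp hv0 with ⟨z, _⟩; exact ⟨z⟩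
  obtain ⟨u, -, hu⟩ := Finset.exists_max_image Finset.univ (fun w => |v w|)
    ⟨Classical.arbitrary V, Finset.mem_univ _⟩
  have hu' : ∀ z, |v z| ≤ |v u| := fun z => hu z (Finset.mem_univ z)
  have hupos : 0 < |v u| := by
    rcases Function.ne_iff.mp hv0 with ⟨z, hz⟩
    exact lt_of_lt_of_le (abs_pos.mpr hz) (hu' z)
  rcases (abs_pos.mp hupos).lt_or_gt with hneg | hpos
  · apply structure_core G hfree hm hm1 (-v) ?_ u ?_ ?_
    · rw [Matrix.mulVec_neg, hv, smul_neg]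
    · intro z
      simp only [Pi.neg_apply, abs_neg]
      calc |v z| ≤ |v u| := hu' z
        _ = -(v u) := abs_of_neg hneg
    · simpa using neg_pos.mpr hneg
  · exact structure_core G hfree hm hm1 v hv u
      (fun z => (hu' z).trans_eq (abs_of_pos hpos)) hpos

lemma bot_of_no_edges {V : Type} [Fintype V] [DecidableEq V] (G : SimpleGraph V)
    (hm : G.edgeFinset.card = 0) : G = ⊥ := by
  rw [← SimpleGraph.edgeSet_eq_empty, ← coe_edgeFinset, Finset.card_eq_zero.mp hm]
  simp

end aux

open scoped Classical in

theorem stmt11 {V : Type} [Fintype V] [DecidableEq V] (G : SimpleGraph V) (m : ℕ)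
    (hfree : G.CliqueFree 3) (hGm : G.edgeSet.ncard = m) :
    specRad G ≤ Real.sqrt m ∧
    (specRad G = Real.sqrt m ↔ ∃ a b k : ℕ, a * b = m ∧
      Nonempty (G ≃g disjUnion (completeBipartiteGraph (Fin a) (Fin b))
        (⊥ : SimpleGraph (Fin k)))) := by
  have hm' : G.edgeFinset.card = m := by
    rw [← hGm, ← Set.ncard_coe_finset, coe_edgeFinset]
  have hub : ∀ μ ∈ spectrum ℝ (adjMat G), μ ≤ Real.sqrt m := by
    intro μ hμ
    obtain ⟨v, hv0, hv⟩ := (mem_spectrum_iff _ μ).mp hμ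
    have h1 : μ ^ 2 ≤ (m : ℝ) := by
      have := eig_sq_le G hfree v hv0 μ hv
      rwa [hm'] at this
    calc μ ≤ |μ| := le_abs_self μ
      _ = Real.sqrt (μ ^ 2) := (Real.sqrt_sq_eq_abs μ).symm
      _ ≤ Real.sqrt m := Real.sqrt_le_sqrt h1
  have hbdd : BddAbove (spectrum ℝ (adjMat G)) := ⟨Real.sqrt m, hub⟩
  have hle : specRad G ≤ Real.sqrt m := Real.sSup_le hub (Real.sqrt_nonneg _)
  refine ⟨hle, ?_, ?_⟩
  · intro heq
    by_cases hm0 : m = 0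
    · subst hm0
      have hbot : G = ⊥ := bot_of_no_edges G hm'
      refine ⟨0, 0, Fintype.card V, by simp, ?_⟩
      refine ⟨⟨Fintype.equivOfCardEq (by simp), ?_⟩⟩
      intro x y
      rw [target_adj]
      constructor
      · rintro (⟨i, _, _, _⟩ | ⟨i, _, _, _⟩) <;> exact i.elim0
      · intro h
        rw [hbot] at h
        exact h.elim
    · have hm1 : 1 ≤ m := Nat.one_le_iff_ne_zero.mpr hm0
      have hsne : (spectrum ℝ (adjMat G)).Nonempty := by
        by_contra h
        rw [Set.not_nonempty_iff_eq_empty] at h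
        rw [specRad, h, Real.sSup_empty] at heq
        have h2 : (0:ℝ) < Real.sqrt m := Real.sqrt_pos.mpr (by exact_mod_cast hm1)
        linarith
      have hmem : Real.sqrt m ∈ spectrum ℝ (adjMat G) := by
        rw [← heq]
        exact hsne.csSup_mem (spectrum_finite G)
      obtain ⟨v, hv0, hv⟩ := (mem_spectrum_iff _ _).mp hmem
      exact structure_of_eigen G hfree hm' hm1 v hv0 hv
  · rintro ⟨a, b, k, hab, ⟨e⟩⟩
    by_cases hm0 : m = 0
    · subst hm0
      rw [specRad_of_bot G (bot_of_no_edges G hm')]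
      simp
    · have ha : 1 ≤ a := by
        rcases Nat.eq_zero_or_pos a with h | h
        · exact absurd (by rw [← hab, h, zero_mul]) hm0
        · exact h
      have hb : 1 ≤ b := by
        rcases Nat.eq_zero_or_pos b with h | h
        · exact absurd (by rw [← hab, h, mul_zero]) hm0
        · exact h
      obtain ⟨v, hv0, hv⟩ := sqrt_eigen G ha hb hab e
      have hmem : Real.sqrt m ∈ spectrum ℝ (adjMat G) :=
        (mem_spectrum_iff _ _).mpr ⟨v, hv0, hv⟩
      exact le_antisymm hle (le_csSup hbdd hmem)
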